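/- There exists a subgroup of Sym(ℕ) which is not the automorphism group of any first-order relational structure on ℕ with relations of finite arity (namely, the group of finitely supported permutations). -/

import Mathlib

/-- The neighbor-swap function on ℕ. -/
def nswap (n : ℕ) : ℕ := if Even n then n + 1 else n - 1

lemma nswap_invol : Function.Involutive nswap := by
  intro n
  rcases Nat.even_or_odd n with h | h
  · have : ¬ Even (n + 1) := by simpa [Nat.even_add_one] using h
    simp [nswap, h, this]
  · obtain ⟨k, hk⟩ := h
    subst hk
    have h1 : ¬ Even (2 * k + 1) := by simp [Nat.even_add_one]
    simp [nswap, h1]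

lemma nswap_ne (n : ℕ) : nswap n ≠ n := by
  rcases Nat.even_or_odd n with h | h
  · simp [nswap, h]
  · have h1 : ¬ Even n := Nat.not_even_iff_odd.mpr h
    have h2 : 1 ≤ n := h.pos
    simp [nswap, h1]
    omega

lemma nswap_le {M n : ℕ} (hM : Odd M) (hn : n ≤ M) : nswap n ≤ M := by
  rcases Nat.even_or_odd n with h | h
  · have : n ≠ M := by rintro rfl; exact (Nat.not_odd_iff_even.mpr h) hM
    rw [nswap, if_pos h]; omega
  · have h1 : ¬ Even n := Nat.not_even_iff_odd.mpr h
    rw [nswap, if_neg h1]; omega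

/-- Truncation of `nswap` at an odd bound `M` : a finitely supported involution. -/
def tswapFun (M : ℕ) (n : ℕ) : ℕ := if n ≤ M then nswap n else n

lemma tswap_invol (M : ℕ) (hM : Odd M) : Function.Involutive (tswapFun M) := by
  intro n
  by_cases hn : n ≤ M
  · have h2 : nswap n ≤ M := nswap_le hM hn
    simp [tswapFun, hn, h2, nswap_invol n]
  · simp [tswapFun, hn]

theorem stmt_4 :
    ∃ H : Subgroup (Equiv.Perm ℕ),
      (∀ g : Equiv.Perm ℕ, g ∈ H ↔ {a | g a ≠ a}.Finite) ∧
      ¬ ∃ (ι : Type) (ar : ι → ℕ) (R : (i : ι) → (Fin (ar i) → ℕ) → Prop),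
          (H : Set (Equiv.Perm ℕ)) =
            {g : Equiv.Perm ℕ | ∀ i (a : Fin (ar i) → ℕ), R i a ↔ R i (fun j => g (a j))} := by
  refine ⟨{ carrier := {g : Equiv.Perm ℕ | {a | g a ≠ a}.Finite}
            one_mem' := by simp
            mul_mem' := by
              intro g h hg hh
              refine ((hg.union hh).subset ?_)
              intro a ha
              simp only [Set.mem_setOf_eq, Equiv.Perm.mul_apply] at ha ⊢
              by_cases h1 : h a = a
              · left; rw [h1] at ha; exact ha
              · right; exact h1
            inv_mem' := by
              intro g hg
              have : {a | g⁻¹ a ≠ a} ⊆ g '' {a | g a ≠ a} := by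
                intro a ha
                simp only [Set.mem_setOf_eq] at ha
                refine ⟨g⁻¹ a, ?_, by simp⟩
                simp only [Set.mem_setOf_eq, show g (g⁻¹ a) = a from g.apply_symm_apply a]
                intro h
                exact ha (by rw [← h])
              exact (hg.image g).subset this }, fun g => Iff.rfl, ?_⟩
  rintro ⟨ι, ar, R, hR⟩
  -- the infinitely supported neighbor-swap permutation
  set g : Equiv.Perm ℕ := nswap_invol.toPerm with hg
  have hgmem : g ∈ {g : Equiv.Perm ℕ |
      ∀ i (a : Fin (ar i) → ℕ), R i a ↔ R i (fun j => g (a j))} := by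
    intro i a
    set N : ℕ := Finset.univ.sup a with hN
    have haN : ∀ j, a j ≤ 2 * N + 1 := fun j =>
      le_trans (Finset.le_sup (Finset.mem_univ j)) (by omega)
    have hModd : Odd (2 * N + 1) := ⟨N, by ring⟩
    set h : Equiv.Perm ℕ := (tswap_invol (2 * N + 1) hModd).toPerm with hh
    have hhmem : {a | h a ≠ a}.Finite := by
      refine (Set.finite_Iic (2 * N + 1)).subset ?_
      intro b hb
      simp only [Set.mem_setOf_eq] at hb
      simp only [Set.mem_Iic]
      by_contra hble
      push_neg at hble
      apply hb
      show tswapFun (2 * N + 1) b = b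
      rw [tswapFun, if_neg (by omega)]
    have : h ∈ {g : Equiv.Perm ℕ |
        ∀ i (a : Fin (ar i) → ℕ), R i a ↔ R i (fun j => g (a j))} := by
      rw [← hR]; exact hhmem
    have key := this i a
    have heq : (fun j => h (a j)) = (fun j => g (a j)) := by
      funext j
      show tswapFun (2 * N + 1) (a j) = nswap (a j)
      rw [tswapFun, if_pos (haN j)]
    rwa [heq] at key
  rw [← hR] at hgmem
  have hfin : {a | g a ≠ a}.Finite := hgmem
  have huniv : {a | g a ≠ a} = Set.univ := by
    ext a
    simp only [Set.mem_setOf_eq, Set.mem_univ, iff_true]; exact nswap_ne a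
  rw [huniv] at hfin
  exact Set.infinite_univ hfin
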